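/- Truncated tail integral bound: For every real a with 0 < a ≤ 1, ∫_0^∞ min( 1, (9/y² + 6/y⁴)·a² ) dy ≤ 3√a + 6a. -/

import Mathlib

open MeasureTheory Set Real

lemma tail_int_inv_pow_two {c : ℝ} (hc : 0 < c) :
    IntegrableOn (fun y : ℝ => 1 / y ^ 2) (Set.Ioi c) ∧
      ∫ y in Set.Ioi c, 1 / y ^ 2 = 1 / c := by
  have heq : ∀ x ∈ Set.Ioi c, x ^ (-2 : ℝ) = 1 / x ^ 2 := by
    intro x hx
    have hx0 : 0 < x := hc.trans hx
    rw [show (-2 : ℝ) = -(2 : ℕ) by norm_num, Real.rpow_neg hx0.le, Real.rpow_natCast]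
    simp
  constructor
  · exact (integrableOn_Ioi_rpow_of_lt (by norm_num) hc).congr_fun heq measurableSet_Ioi
  · rw [← setIntegral_congr_fun measurableSet_Ioi heq,
      integral_Ioi_rpow_of_lt (by norm_num) hc]
    rw [show (-2 : ℝ) + 1 = -1 by norm_num, Real.rpow_neg_one]
    field_simp

lemma tail_int_inv_pow_four {c : ℝ} (hc : 0 < c) :
    IntegrableOn (fun y : ℝ => 1 / y ^ 4) (Set.Ioi c) ∧
      ∫ y in Set.Ioi c, 1 / y ^ 4 = 1 / (3 * c ^ 3) := by
  have heq : ∀ x ∈ Set.Ioi c, x ^ (-4 : ℝ) = 1 / x ^ 4 := by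
    intro x hx
    have hx0 : 0 < x := hc.trans hx
    rw [show (-4 : ℝ) = -(4 : ℕ) by norm_num, Real.rpow_neg hx0.le, Real.rpow_natCast]
    simp
  constructor
  · exact (integrableOn_Ioi_rpow_of_lt (by norm_num) hc).congr_fun heq measurableSet_Ioi
  · rw [← setIntegral_congr_fun measurableSet_Ioi heq,
      integral_Ioi_rpow_of_lt (by norm_num) hc]
    rw [show (-4 : ℝ) + 1 = -3 by norm_num, show (-3 : ℝ) = -(3:ℕ) by norm_num,
      Real.rpow_neg hc.le, Real.rpow_natCast]
    field_simp
    ring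

/-- **Truncated tail integral bound.** For every real `0 < a ≤ 1`,
`∫_0^∞ min(1, (9/y² + 6/y⁴)·a²) dy ≤ 3√a + 6a`. -/
theorem truncated_tail_integral_bound (a : ℝ) (ha0 : 0 < a) (ha1 : a ≤ 1) :
    ∫ y in Set.Ioi (0 : ℝ), min 1 ((9 / y ^ 2 + 6 / y ^ 4) * a ^ 2)
      ≤ 3 * Real.sqrt a + 6 * a := by
  set s := Real.sqrt a with hsdef
  have hs0 : 0 < s := Real.sqrt_pos.2 ha0
  have hsa : s * s = a := Real.mul_self_sqrt ha0.le
  have hs1 : s ≤ 1 := by nlinarith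
  set c : ℝ := 2 * s with hcdef
  have hc : 0 < c := by positivity
  set f : ℝ → ℝ := fun y => (9 / y ^ 2 + 6 / y ^ 4) * a ^ 2 with hf
  set m : ℝ → ℝ := fun y => min 1 (f y) with hm
  have hfeq : f = fun y => 9 * a ^ 2 * (1 / y ^ 2) + 6 * a ^ 2 * (1 / y ^ 4) := by
    funext y; simp only [hf]; ring
  obtain ⟨hint2, hval2⟩ := tail_int_inv_pow_two hc
  obtain ⟨hint4, hval4⟩ := tail_int_inv_pow_four hc
  have hfint : IntegrableOn f (Set.Ioi c) := by
    rw [hfeq]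
    exact (hint2.const_mul _).add (hint4.const_mul _)
  have hfnonneg : ∀ y, 0 ≤ f y := by
    intro y; simp only [hf]; positivity
  have hmmeas : Measurable m := by
    apply Measurable.min measurable_const
    apply Measurable.mul _ measurable_const
    exact (measurable_const.div (measurable_id.pow_const 2)).add
      (measurable_const.div (measurable_id.pow_const 4))
  have hconst : IntegrableOn (fun _ : ℝ => (1:ℝ)) (Set.Ioc 0 c) :=
    integrableOn_const measure_Ioc_lt_top.ne
  have hmint1 : IntegrableOn m (Set.Ioc 0 c) := by
    refine Integrable.mono' hconst
      hmmeas.aestronglyMeasurable ?_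
    filter_upwards with y
    rw [Real.norm_eq_abs, abs_of_nonneg (le_min zero_le_one (hfnonneg y))]
    exact min_le_left _ _
  have hmint2 : IntegrableOn m (Set.Ioi c) := by
    refine Integrable.mono' hfint hmmeas.aestronglyMeasurable ?_
    filter_upwards with y
    rw [Real.norm_eq_abs, abs_of_nonneg (le_min zero_le_one (hfnonneg y))]
    exact min_le_right _ _
  have hsplit : Set.Ioi (0 : ℝ) = Set.Ioc 0 c ∪ Set.Ioi c :=
    (Set.Ioc_union_Ioi_eq_Ioi hc.le).symm
  rw [hsplit, setIntegral_union (Set.Ioc_disjoint_Ioi le_rfl) measurableSet_Ioi hmint1 hmint2]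
  have h1 : ∫ y in Set.Ioc (0:ℝ) c, m y ≤ c := by
    have := setIntegral_mono_on hmint1 hconst
      measurableSet_Ioc (fun y _ => min_le_left 1 (f y) : ∀ y ∈ Set.Ioc (0:ℝ) c, m y ≤ 1)
    simp [Real.volume_Ioc, ENNReal.toReal_ofReal hc.le] at this
    rcases this with h | h <;> linarith
  have h2 : ∫ y in Set.Ioi c, m y ≤ 9 * a ^ 2 * (1 / c) + 6 * a ^ 2 * (1 / (3 * c ^ 3)) := by
    have hle := setIntegral_mono_on hmint2 hfint measurableSet_Ioi
      (fun y _ => min_le_right 1 (f y) : ∀ y ∈ Set.Ioi c, m y ≤ f y)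
    have : ∫ y in Set.Ioi c, f y
        = 9 * a ^ 2 * (1 / c) + 6 * a ^ 2 * (1 / (3 * c ^ 3)) := by
      rw [hfeq, integral_add ((hint2.const_mul _)) (hint4.const_mul _),
        integral_const_mul, integral_const_mul, hval2, hval4]
    linarith
  have hc3 : c ^ 3 = 8 * (s * s * s) := by rw [hcdef]; ring
  have key : c + (9 * a ^ 2 * (1 / c) + 6 * a ^ 2 * (1 / (3 * c ^ 3)))
      ≤ 3 * s + 6 * a := by
    rw [hcdef, hc3, ← hsa]
    rw [div_eq_mul_inv, div_eq_mul_inv]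
    have h2s : (2 * s)⁻¹ = 1 / (2 * s) := by rw [one_div]
    have e1 : (9 * (s*s) ^ 2 * (1 * (2 * s)⁻¹)) = 9 / 2 * (s * s * s) := by
      field_simp
    have e2 : (6 * (s*s) ^ 2 * (1 * (3 * (8 * (s * s * s)))⁻¹)) = s / 4 := by
      field_simp; ring
    rw [e1, e2]
    nlinarith [sq_nonneg s, sq_nonneg (1 - s), mul_pos hs0 hs0]
  linarith
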